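/- arXiv:2404.09073 — 2 statements merged into one kernel-verified Lean document; each statement's English description precedes it below -/
import Mathlib

section
/- Let W = (W_1,...,W_n) be the universal model associated with an admissible free holomorphic function g, and suppose M ⊆ F^2(H_n) ⊗ K is co-invariant under each W_i ⊗ I_K. Then the closed span of {(W_α ⊗ I_K) M : α ∈ F_n^+} equals F^2(H_n) ⊗ closure((P_{C1} ⊗ I_K) M), where P_{C1} is the projection onto the vacuum C·1 (identifying C1 ⊗ K with K). -/
open scoped InnerProductSpace
open Filter
open scoped ENNReal

noncomputable section

/-- Words in the free semigroup `F_n^+`, encoded as lists over `Fin n`. -/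
abbrev Word (n : ℕ) := List (Fin n)

/-- The full Fock space tensored with `K`, realized as `ℓ²`-sequences over words with values
in `K`; for `K = ℂ` this is the full Fock space `F²(H_n)` with orthonormal basis `{e_α}`. -/
abbrev FockK (n : ℕ) (K : Type*) [NormedAddCommGroup K] [InnerProductSpace ℂ K] :=
  lp (fun _ : Word n => K) 2

/-- The finite set of words of length `p`. -/
def wordsLen (n p : ℕ) : Finset (Word n) :=
  (Finset.univ : Finset (List.Vector (Fin n) p)).image List.Vector.toList

variable {n : ℕ} {E : Type*} [NormedAddCommGroup E] [InnerProductSpace ℂ E] [CompleteSpace E]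

/-- For a word `α = g_{i₁} ⋯ g_{i_k}`, the operator `X_α = X_{i₁} ⋯ X_{i_k}`. -/
def wordOp (X : Fin n → (E →L[ℂ] E)) (α : Word n) : E →L[ℂ] E := (α.map X).prod

/-- Partial sums `∑_{p < N} ∑_{|α| = p} a_α X_α X_α^*` of the defect series
`Δ_{g⁻¹}(X, X^*)` associated with the coefficients `a` of `g⁻¹`. -/
def deltaPartial (a : Word n → ℝ) (X : Fin n → (E →L[ℂ] E)) (N : ℕ) : E →L[ℂ] E :=
  ∑ p ∈ Finset.range N, ∑ α ∈ wordsLen n p,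
    (a α : ℂ) • (wordOp X α ∘L (wordOp X α).adjoint)

/-! ### Auxiliary definitions and lemmas -/

/-- coordinate evaluation as a continuous linear map -/
def coordCLM (n : ℕ) (K : Type*) [NormedAddCommGroup K] [InnerProductSpace ℂ K]
    (β : Word n) : FockK n K →L[ℂ] K :=
  LinearMap.mkContinuous
    { toFun := fun f => (f : ∀ _ : Word n, K) β
      map_add' := fun f g => by simp only []; rw [lp.coeFn_add]; rfl
      map_smul' := fun c f => by simp only [RingHom.id_apply]; rw [lp.coeFn_smul]; rfl }
    1 (fun f => by
      simpa using lp.norm_apply_le_norm (by norm_num : (2 : ℝ≥0∞) ≠ 0) f β)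

lemma single_coord (n : ℕ) (K : Type*) [NormedAddCommGroup K] [InnerProductSpace ℂ K]
    (β δ : Word n) (k : K) :
    (lp.single 2 β k : ∀ _ : Word n, K) δ = if δ = β then k else 0 := by
  by_cases h : δ = β
  · subst h; simp [lp.single_apply_self]
  · simp [lp.single_apply_ne (E := fun _ : Word n => K) 2 β k h, h]

/-- `lp.single` as a continuous linear map -/
def singleCLM (n : ℕ) (K : Type*) [NormedAddCommGroup K] [InnerProductSpace ℂ K]
    (β : Word n) : K →L[ℂ] FockK n K :=
  LinearMap.mkContinuous
    { toFun := fun k => lp.single 2 β k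
      map_add' := fun x y => by
        apply lp.ext; funext δ
        rw [lp.coeFn_add, Pi.add_apply, single_coord, single_coord, single_coord]
        split_ifs <;> simp
      map_smul' := fun c x => by simp [lp.single_smul] }
    1 (fun k => by
      simpa using le_of_eq (lp.norm_single (p := 2) (by norm_num)
        (fun _ : Word n => k) β))

set_option maxHeartbeats 2000000 in
/-- If `M ⊆ F²(H_n) ⊗ K` is co-invariant under each `W_i ⊗ I_K`, then the
closed span of `{(W_α ⊗ I_K) M : α ∈ F_n^+}` equals `F²(H_n) ⊗ closure((P_{ℂ1} ⊗ I_K) M)`,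
identifying `ℂ1 ⊗ K` with `K` (so `(P_{ℂ1} ⊗ I_K) M` is the set of vacuum components
`f ↦ f([])` of elements of `M`). -/
theorem coinvariant_cyclic_span
    {n : ℕ} {K : Type*} [NormedAddCommGroup K] [InnerProductSpace ℂ K] [CompleteSpace K]
    (b a : Word n → ℝ) (hb : ∀ α, 0 < b α) (hb0 : b ([] : Word n) = 1)
    (ha0 : a ([] : Word n) = 1)
    (hbd : ∃ C : ℝ, ∀ (i : Fin n) (α : Word n), b α / b (i :: α) ≤ C)
    (W : Fin n → (FockK n K →L[ℂ] FockK n K))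
    (hW : ∀ (i : Fin n) (α : Word n) (k : K),
      W i (lp.single 2 α k) =
        ((Real.sqrt (b α / b (i :: α)) : ℝ) : ℂ) • lp.single 2 (i :: α) k)
    (hDelta : ∀ x : FockK n K,
      Tendsto (fun N : ℕ => deltaPartial a W N x) atTop
        (nhds (lp.single 2 ([] : Word n) ((x : ∀ _ : Word n, K) []))))
    (M : Submodule ℂ (FockK n K)) (hM : IsClosed (M : Set (FockK n K)))
    (hco : ∀ i : Fin n, ∀ x ∈ M, (W i).adjoint x ∈ M) :
    closure (↑(Submodule.span ℂ
        (⋃ α : Word n, wordOp W α '' (M : Set (FockK n K)))) : Set (FockK n K)) =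
      {f : FockK n K | ∀ β : Word n,
        (f : ∀ _ : Word n, K) β ∈
          closure ((fun g : FockK n K => (g : ∀ _ : Word n, K) []) '' (M : Set (FockK n K)))} := by
  -- the nonvanishing square-root constants
  have hcR : ∀ β : Word n, Real.sqrt (b β)⁻¹ ≠ 0 :=
    fun β => (Real.sqrt_pos.mpr (inv_pos.mpr (hb β))).ne'
  have hcC : ∀ β : Word n, ((Real.sqrt (b β)⁻¹ : ℝ) : ℂ) ≠ 0 :=
    fun β => Complex.ofReal_ne_zero.mpr (hcR β)
  -- coordinate description of the adjoint of `W i`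
  have hadj : ∀ (i : Fin n) (x : FockK n K) (α : Word n),
      ((W i).adjoint x : ∀ _ : Word n, K) α
        = ((Real.sqrt (b α / b (i :: α)) : ℝ) : ℂ) • (x : ∀ _ : Word n, K) (i :: α) := by
    intro i x α
    apply ext_inner_left ℂ
    intro k
    calc ⟪k, ((W i).adjoint x : ∀ _ : Word n, K) α⟫_ℂ
        = ⟪lp.single 2 α k, (W i).adjoint x⟫_ℂ :=
          (lp.inner_single_left (G := fun _ : Word n => K) α k ((W i).adjoint x)).symm
      _ = ⟪W i (lp.single 2 α k), x⟫_ℂ :=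
          ContinuousLinearMap.adjoint_inner_right (W i) _ _
      _ = ⟪((Real.sqrt (b α / b (i :: α)) : ℝ) : ℂ) • lp.single 2 (i :: α) k, x⟫_ℂ := by
          rw [hW]
      _ = ((Real.sqrt (b α / b (i :: α)) : ℝ) : ℂ) * ⟪lp.single 2 (i :: α) k, x⟫_ℂ := by
          rw [inner_smul_left, Complex.conj_ofReal]
      _ = ((Real.sqrt (b α / b (i :: α)) : ℝ) : ℂ)
            * ⟪k, (x : ∀ _ : Word n, K) (i :: α)⟫_ℂ := by
          rw [lp.inner_single_left (G := fun _ : Word n => K)]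
      _ = ⟪k, ((Real.sqrt (b α / b (i :: α)) : ℝ) : ℂ) • (x : ∀ _ : Word n, K) (i :: α)⟫_ℂ :=
          (inner_smul_right _ _ _).symm
  -- adjoint of `W i` on basis vectors
  have hWadj_single : ∀ (i : Fin n) (γ : Word n) (k : K),
      (W i).adjoint (lp.single 2 (i :: γ) k)
        = ((Real.sqrt (b γ / b (i :: γ)) : ℝ) : ℂ) • lp.single 2 γ k := by
    intro i γ k
    apply lp.ext; funext α
    show ((W i).adjoint (lp.single 2 (i :: γ) k) : ∀ _ : Word n, K) α = _
    rw [hadj, lp.coeFn_smul, Pi.smul_apply, single_coord, single_coord]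
    by_cases h : α = γ
    · subst h; rw [if_pos rfl, if_pos rfl]
    · rw [if_neg (by simpa using h), if_neg h, smul_zero, smul_zero]
  have hWadj_single_ne : ∀ (i : Fin n) (β : Word n) (k : K), (∀ γ, β ≠ i :: γ) →
      (W i).adjoint (lp.single 2 β k) = 0 := by
    intro i β k hβ
    apply lp.ext; funext α
    show ((W i).adjoint (lp.single 2 β k) : ∀ _ : Word n, K) α = (0 : FockK n K) α
    rw [hadj, single_coord, if_neg (fun h => hβ α h.symm), smul_zero, lp.coeFn_zero,
      Pi.zero_apply]
  -- coordinate description of `W i`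
  have hWcons : ∀ (i : Fin n) (x : FockK n K) (γ : Word n),
      ((W i x : FockK n K) : ∀ _ : Word n, K) (i :: γ)
        = ((Real.sqrt (b γ / b (i :: γ)) : ℝ) : ℂ) • (x : ∀ _ : Word n, K) γ := by
    intro i x γ
    apply ext_inner_left ℂ
    intro k
    calc ⟪k, ((W i x : FockK n K) : ∀ _ : Word n, K) (i :: γ)⟫_ℂ
        = ⟪lp.single 2 (i :: γ) k, W i x⟫_ℂ :=
          (lp.inner_single_left (G := fun _ : Word n => K) (i :: γ) k (W i x)).symm
      _ = ⟪(W i).adjoint (lp.single 2 (i :: γ) k), x⟫_ℂ :=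
          (ContinuousLinearMap.adjoint_inner_left (W i) _ _).symm
      _ = ⟪((Real.sqrt (b γ / b (i :: γ)) : ℝ) : ℂ) • lp.single 2 γ k, x⟫_ℂ := by
          rw [hWadj_single]
      _ = ((Real.sqrt (b γ / b (i :: γ)) : ℝ) : ℂ) * ⟪lp.single 2 γ k, x⟫_ℂ := by
          rw [inner_smul_left, Complex.conj_ofReal]
      _ = ((Real.sqrt (b γ / b (i :: γ)) : ℝ) : ℂ)
            * ⟪k, (x : ∀ _ : Word n, K) γ⟫_ℂ := by
          rw [lp.inner_single_left (G := fun _ : Word n => K)]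
      _ = ⟪k, ((Real.sqrt (b γ / b (i :: γ)) : ℝ) : ℂ) • (x : ∀ _ : Word n, K) γ⟫_ℂ :=
          (inner_smul_right _ _ _).symm
  have hWne : ∀ (i : Fin n) (x : FockK n K) (β : Word n), (∀ γ, β ≠ i :: γ) →
      ((W i x : FockK n K) : ∀ _ : Word n, K) β = 0 := by
    intro i x β hβ
    apply ext_inner_left ℂ
    intro k
    calc ⟪k, ((W i x : FockK n K) : ∀ _ : Word n, K) β⟫_ℂ
        = ⟪lp.single 2 β k, W i x⟫_ℂ :=
          (lp.inner_single_left (G := fun _ : Word n => K) β k (W i x)).symm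
      _ = ⟪(W i).adjoint (lp.single 2 β k), x⟫_ℂ :=
          (ContinuousLinearMap.adjoint_inner_left (W i) _ _).symm
      _ = ⟪(0 : FockK n K), x⟫_ℂ := by rw [hWadj_single_ne i β k hβ]
      _ = 0 := inner_zero_left _
      _ = ⟪k, (0 : K)⟫_ℂ := (inner_zero_right _).symm
  -- word operators
  have hword_nil : wordOp W ([] : Word n) = 1 := by simp [wordOp]
  have hword_cons : ∀ (i : Fin n) (γ : Word n), wordOp W (i :: γ) = W i ∘L wordOp W γ := by
    intro i γ; simp only [wordOp, List.map_cons, List.prod_cons]; rfl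
  have hadj_nil : (wordOp W ([] : Word n)).adjoint = 1 := by
    rw [hword_nil, ContinuousLinearMap.one_def, ContinuousLinearMap.adjoint_id]
  -- multiplicativity of the square-root constants
  have hmul : ∀ (i : Fin n) (γ : Word n),
      ((Real.sqrt (b γ)⁻¹ : ℝ) : ℂ) * ((Real.sqrt (b γ / b (i :: γ)) : ℝ) : ℂ)
        = ((Real.sqrt (b (i :: γ))⁻¹ : ℝ) : ℂ) := by
    intro i γ
    rw [← Complex.ofReal_mul]
    congr 1
    rw [← Real.sqrt_mul (inv_pos.mpr (hb γ)).le]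
    congr 1
    rw [div_eq_mul_inv, ← mul_assoc, inv_mul_cancel₀ (hb γ).ne', one_mul]
  -- membership of word-adjoints
  have hadjmem : ∀ (β : Word n) (x : FockK n K), x ∈ M → (wordOp W β).adjoint x ∈ M := by
    intro β
    induction β with
    | nil => intro x hx; rw [hadj_nil]; exact hx
    | cons i γ ih =>
        intro x hx
        rw [hword_cons, ContinuousLinearMap.adjoint_comp, ContinuousLinearMap.comp_apply]
        exact ih _ (hco i x hx)
  -- vacuum coordinate of word-adjoints
  have hadjvac : ∀ (β : Word n) (x : FockK n K),
      ((wordOp W β).adjoint x : ∀ _ : Word n, K) []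
        = ((Real.sqrt (b β)⁻¹ : ℝ) : ℂ) • (x : ∀ _ : Word n, K) β := by
    intro β
    induction β with
    | nil => intro x; rw [hadj_nil]; simp [hb0]
    | cons i γ ih =>
        intro x
        rw [hword_cons, ContinuousLinearMap.adjoint_comp, ContinuousLinearMap.comp_apply,
          ih, hadj, smul_smul, hmul]
  -- word operators on vacuum basis vectors
  have hword_single : ∀ (β : Word n) (k : K),
      wordOp W β (lp.single 2 ([] : Word n) k)
        = ((Real.sqrt (b β)⁻¹ : ℝ) : ℂ) • lp.single 2 β k := by
    intro β
    induction β with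
    | nil => intro k; rw [hword_nil]; simp [hb0]
    | cons i γ ih =>
        intro k
        rw [hword_cons, ContinuousLinearMap.comp_apply, ih, map_smul, hW, smul_smul, hmul]
  -- the relevant submodules
  set S : Submodule ℂ (FockK n K) :=
    Submodule.span ℂ (⋃ α : Word n, wordOp W α '' (M : Set (FockK n K))) with hS
  set D : Submodule ℂ K :=
    (Submodule.map ((coordCLM n K ([] : Word n)) : FockK n K →ₗ[ℂ] K) M).topologicalClosure
    with hDdef
  have hD : (D : Set K)
      = closure ((fun g : FockK n K => (g : ∀ _ : Word n, K) [])
          '' (M : Set (FockK n K))) := by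
    rw [hDdef, Submodule.topologicalClosure_coe, Submodule.map_coe]
    rfl
  set N : Submodule ℂ (FockK n K) :=
    ⨅ β : Word n, Submodule.comap ((coordCLM n K β : FockK n K →ₗ[ℂ] K)) D with hNdef
  have hN : ∀ f : FockK n K, f ∈ N ↔ ∀ β, (f : ∀ _ : Word n, K) β ∈ D := by
    intro f
    rw [hNdef, Submodule.mem_iInf]
    exact forall_congr' fun β => Submodule.mem_comap
  have hNclosed : IsClosed (N : Set (FockK n K)) := by
    have h1 : (N : Set (FockK n K)) = ⋂ β : Word n, coordCLM n K β ⁻¹' (D : Set K) := by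
      ext f
      rw [SetLike.mem_coe, hN f]
      constructor
      · intro h; exact Set.mem_iInter.mpr fun β => h β
      · intro h β; exact Set.mem_iInter.mp h β
    rw [h1]
    exact isClosed_iInter fun β =>
      (Submodule.isClosed_topologicalClosure _).preimage (coordCLM n K β).continuous
  -- M ⊆ N
  have hMN : ∀ x : FockK n K, x ∈ M → ∀ β : Word n, (x : ∀ _ : Word n, K) β ∈ D := by
    intro x hx β
    have h1 : ((wordOp W β).adjoint x : ∀ _ : Word n, K) [] ∈ D :=
      Submodule.le_topologicalClosure _
        (Submodule.mem_map_of_mem (f := (coordCLM n K ([] : Word n) : FockK n K →ₗ[ℂ] K))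
          (hadjmem β x hx))
    have h2 : (x : ∀ _ : Word n, K) β
        = ((Real.sqrt (b β)⁻¹ : ℝ) : ℂ)⁻¹ • ((wordOp W β).adjoint x : ∀ _ : Word n, K) [] := by
      rw [hadjvac, smul_smul, inv_mul_cancel₀ (hcC β), one_smul]
    rw [h2]
    exact D.smul_mem _ h1
  -- N is invariant under each W i
  have hNW : ∀ (i : Fin n) (y : FockK n K), y ∈ N → W i y ∈ N := by
    intro i y hy
    rw [hN] at hy ⊢
    intro β
    cases β with
    | nil =>
        rw [hWne i y [] (fun γ h => List.cons_ne_nil i γ h.symm)]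
        exact D.zero_mem
    | cons j γ =>
        by_cases h : j = i
        · subst h
          rw [hWcons]
          exact D.smul_mem _ (hy γ)
        · rw [hWne i y (j :: γ) (fun γ' hh => h (List.cons_eq_cons.mp hh).1)]
          exact D.zero_mem
  have hNword : ∀ (α : Word n) (x : FockK n K), x ∈ N → wordOp W α x ∈ N := by
    intro α
    induction α with
    | nil => intro x hx; rw [hword_nil]; exact hx
    | cons i γ ih =>
        intro x hx
        rw [hword_cons, ContinuousLinearMap.comp_apply]
        exact hNW i _ (ih x hx)
  -- S ≤ N, hence closure of S ≤ N
  have hSN : S ≤ N := by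
    rw [hS]
    refine Submodule.span_le.mpr ?_
    rintro y hy
    rcases Set.mem_iUnion.mp hy with ⟨α, hy⟩
    rcases hy with ⟨x, hx, rfl⟩
    exact hNword α x ((hN x).mpr (hMN x hx))
  have hTN : S.topologicalClosure ≤ N :=
    Submodule.topologicalClosure_minimal _ hSN hNclosed
  -- vacuum parts of M lie in the closure of S
  have hvac : ∀ x : FockK n K, x ∈ M →
      lp.single 2 ([] : Word n) ((x : ∀ _ : Word n, K) []) ∈ S.topologicalClosure := by
    intro x hx
    refine (Submodule.isClosed_topologicalClosure S).mem_of_tendsto (hDelta x) ?_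
    filter_upwards with N0
    show deltaPartial a W N0 x ∈ (S.topologicalClosure : Set (FockK n K))
    simp only [deltaPartial, ContinuousLinearMap.sum_apply, ContinuousLinearMap.smul_apply,
      ContinuousLinearMap.comp_apply]
    refine Submodule.sum_mem _ fun p _ => Submodule.sum_mem _ fun α _ =>
      Submodule.smul_mem _ _ ?_
    exact Submodule.le_topologicalClosure S
      (Submodule.subset_span
        (Set.mem_iUnion.mpr ⟨α, Set.mem_image_of_mem _ (hadjmem α x hx)⟩))
  -- the closure of S is invariant under the W's
  have hSW : ∀ i : Fin n, ∀ y ∈ (S : Set (FockK n K)), W i y ∈ (S : Set (FockK n K)) := by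
    intro i y hy
    rw [SetLike.mem_coe] at hy ⊢
    induction hy using Submodule.span_induction with
    | mem z hz =>
        rcases Set.mem_iUnion.mp hz with ⟨α, hz⟩
        rcases hz with ⟨x, hx, rfl⟩
        refine Submodule.subset_span (Set.mem_iUnion.mpr ⟨i :: α, ⟨x, hx, ?_⟩⟩)
        rw [hword_cons, ContinuousLinearMap.comp_apply]
    | zero => rw [map_zero]; exact S.zero_mem
    | add u v hu hv hu' hv' => rw [map_add]; exact S.add_mem hu' hv'
    | smul c u hu hu' => rw [map_smul]; exact S.smul_mem c hu'
  have hTW : ∀ i : Fin n, ∀ y : FockK n K,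
      y ∈ S.topologicalClosure → W i y ∈ S.topologicalClosure := by
    intro i y hy
    have h1 : Set.MapsTo (W i) (closure (S : Set (FockK n K)))
        (closure (S : Set (FockK n K))) :=
      Set.MapsTo.closure (fun z hz => hSW i z hz) (W i).continuous
    have hy' : y ∈ closure (S : Set (FockK n K)) := by
      rwa [← Submodule.topologicalClosure_coe]
    have := h1 hy'
    rwa [← Submodule.topologicalClosure_coe] at this
  have hTword : ∀ (β : Word n) (y : FockK n K),
      y ∈ S.topologicalClosure → wordOp W β y ∈ S.topologicalClosure := by
    intro β
    induction β with
    | nil => intro y hy; rw [hword_nil]; exact hy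
    | cons i γ ih =>
        intro y hy
        rw [hword_cons, ContinuousLinearMap.comp_apply]
        exact hTW i _ (ih y hy)
  -- basis vectors with coefficients in D lie in the closure of S
  have hsingle_mem : ∀ (β : Word n) (k : K), k ∈ D →
      lp.single 2 β k ∈ S.topologicalClosure := by
    intro β k hk
    have hcl : IsClosed (singleCLM n K β ⁻¹' (S.topologicalClosure : Set (FockK n K))) :=
      (Submodule.isClosed_topologicalClosure S).preimage (singleCLM n K β).continuous
    have hsubset : ((fun g : FockK n K => (g : ∀ _ : Word n, K) [])
        '' (M : Set (FockK n K)))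
          ⊆ singleCLM n K β ⁻¹' (S.topologicalClosure : Set (FockK n K)) := by
      rintro _ ⟨x, hx, rfl⟩
      show lp.single 2 β ((x : ∀ _ : Word n, K) []) ∈ S.topologicalClosure
      have h1 : wordOp W β (lp.single 2 ([] : Word n) ((x : ∀ _ : Word n, K) []))
          ∈ S.topologicalClosure := hTword β _ (hvac x hx)
      rw [hword_single] at h1
      have h2 := S.topologicalClosure.smul_mem (((Real.sqrt (b β)⁻¹ : ℝ) : ℂ))⁻¹ h1
      rwa [smul_smul, inv_mul_cancel₀ (hcC β), one_smul] at h2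
    have h3 : (D : Set K) ⊆ singleCLM n K β ⁻¹' (S.topologicalClosure : Set (FockK n K)) := by
      rw [hD]
      exact closure_minimal hsubset hcl
    exact h3 hk
  -- N ≤ closure of S
  have hNT : N ≤ S.topologicalClosure := by
    intro f hf
    have hfk := (hN f).mp hf
    have hsum : HasSum (fun β : Word n => lp.single 2 β ((f : ∀ _ : Word n, K) β)) f :=
      lp.hasSum_single (by norm_num) f
    refine (Submodule.isClosed_topologicalClosure S).mem_of_tendsto hsum ?_
    filter_upwards with s
    exact Submodule.sum_mem _ fun β _ => hsingle_mem β _ (hfk β)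
  have hfinal : S.topologicalClosure = N := le_antisymm hTN hNT
  calc closure (S : Set (FockK n K))
      = (S.topologicalClosure : Set (FockK n K)) := (Submodule.topologicalClosure_coe S).symm
    _ = (N : Set (FockK n K)) := by rw [hfinal]
    _ = {f : FockK n K | ∀ β : Word n,
          (f : ∀ _ : Word n, K) β ∈
            closure ((fun g : FockK n K => (g : ∀ _ : Word n, K) [])
              '' (M : Set (FockK n K)))} := by
        ext f
        rw [SetLike.mem_coe, hN f, Set.mem_setOf_eq]
        exact forall_congr' fun β => by rw [← hD]; exact Iff.rfl
end
end

section
/- Let T = (T_1,...,T_n) be a pure n-tuple in the admissible noncommutative domain D_{g^{-1}}(H). Then the noncommutative Berezin kernel K_{g,T}: H → F^2(H_n) ⊗ D, defined by K_{g,T} h = Σ_α sqrt(b_α) e_α ⊗ Δ_{g^{-1}}(T,T*)^{1/2} T_α* h with D = closure of range of Δ_{g^{-1}}(T,T*), is an isometry satisfying K_{g,T} T_i* = (W_i* ⊗ I_D) K_{g,T} for each i. -/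
open scoped InnerProductSpace
open Filter

noncomputable section

variable {n : ℕ} {E : Type*} [NormedAddCommGroup E] [InnerProductSpace ℂ E] [CompleteSpace E]

lemma mem_wordsLen' {n p : ℕ} {α : Word n} : α ∈ wordsLen n p ↔ α.length = p := by
  constructor
  · intro h
    obtain ⟨v, -, rfl⟩ := Finset.mem_image.mp h
    exact v.toList_length
  · intro h
    exact Finset.mem_image.mpr ⟨⟨α, h⟩, Finset.mem_univ _, rfl⟩

/-- All words of length `< N`. -/
def wordsUpTo (n N : ℕ) : Finset (Word n) := (Finset.range N).biUnion (wordsLen n)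

lemma tendsto_wordsUpTo (n : ℕ) : Tendsto (wordsUpTo n) atTop atTop := by
  rw [Filter.tendsto_atTop_atTop]
  intro s
  refine ⟨s.sup List.length + 1, fun N hN α hα => ?_⟩
  refine Finset.mem_biUnion.mpr ⟨α.length, Finset.mem_range.mpr ?_, mem_wordsLen'.mpr rfl⟩
  calc α.length ≤ s.sup List.length := Finset.le_sup hα
    _ < N := hN

lemma sum_wordsUpTo {n N : ℕ} {M : Type*} [AddCommMonoid M] (f : Word n → M) :
    ∑ α ∈ wordsUpTo n N, f α = ∑ p ∈ Finset.range N, ∑ α ∈ wordsLen n p, f α := by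
  refine Finset.sum_biUnion ?_
  intro p _ q _ hpq
  refine Finset.disjoint_left.mpr fun α h1 h2 => hpq ?_
  rw [← mem_wordsLen'.mp h1, mem_wordsLen'.mp h2]

lemma wordOp_cons {n : ℕ} {E : Type*} [NormedAddCommGroup E] [InnerProductSpace ℂ E]
    (X : Fin n → (E →L[ℂ] E)) (i : Fin n) (α : Word n) :
    wordOp X (i :: α) = X i ∘L wordOp X α := by
  simp [wordOp, List.prod_cons]
  rfl

set_option maxHeartbeats 1600000 in
/-- If `T` is a pure `n`-tuple in the admissible noncommutative domain
`D_{g⁻¹}(H)` (i.e. `Δ := Δ_{g⁻¹}(T,T*)` exists as a WOT limit and is positive, and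
`∑_α b_α T_α Δ T_α* = I`), then the noncommutative Berezin kernel
`K_{g,T} h = ∑_α √b_α e_α ⊗ Δ^{1/2} T_α* h` is an isometry satisfying
`K_{g,T} T_i* = (W_i* ⊗ I) K_{g,T}` for each `i`. -/
theorem berezin_kernel_isometry_intertwines
    {n : ℕ} {H : Type*} [NormedAddCommGroup H] [InnerProductSpace ℂ H] [CompleteSpace H]
    (b a : Word n → ℝ) (hb : ∀ α, 0 < b α) (hb0 : b ([] : Word n) = 1)
    (ha0 : a ([] : Word n) = 1)
    (hbd : ∃ C : ℝ, ∀ (i : Fin n) (α : Word n), b α / b (i :: α) ≤ C)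
    (T : Fin n → (H →L[ℂ] H)) (Δ : H →L[ℂ] H) (hΔpos : Δ.IsPositive)
    (hΔ : ∀ x y : H,
      Tendsto (fun N : ℕ => (⟪deltaPartial a T N x, y⟫_ℂ : ℂ)) atTop (nhds ⟪Δ x, y⟫_ℂ))
    (hpure : ∀ x : H,
      Tendsto (fun N : ℕ =>
          (∑ p ∈ Finset.range N, ∑ α ∈ wordsLen n p,
            ((b α : ℝ) : ℂ) • (wordOp T α ∘L Δ ∘L (wordOp T α).adjoint)) x)
        atTop (nhds x))
    (R : H →L[ℂ] H) (hRpos : R.IsPositive) (hR : R ∘L R = Δ)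
    (W : Fin n → (FockK n H →L[ℂ] FockK n H))
    (hW : ∀ (i : Fin n) (α : Word n) (k : H),
      W i (lp.single 2 α k) =
        ((Real.sqrt (b α / b (i :: α)) : ℝ) : ℂ) • lp.single 2 (i :: α) k)
    (Kb : H →L[ℂ] FockK n H)
    (hKb : ∀ (h : H) (α : Word n),
      (Kb h : ∀ _ : Word n, H) α =
        ((Real.sqrt (b α) : ℝ) : ℂ) • R ((wordOp T α).adjoint h)) :
    (∀ h : H, ‖Kb h‖ = ‖h‖) ∧
    ∀ i : Fin n, Kb ∘L (T i).adjoint = (W i).adjoint ∘L Kb := by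
  classical
  have hRadj : R.adjoint = R := ContinuousLinearMap.isSelfAdjoint_iff'.mp hRpos.isSelfAdjoint
  -- the key pointwise identity for the coordinates of `Kb h`
  have key : ∀ (h : H) (α : Word n),
      (⟪(Kb h : ∀ _ : Word n, H) α, (Kb h : ∀ _ : Word n, H) α⟫_ℂ)
        = ((b α : ℝ) : ℂ) * ⟪(wordOp T α ∘L Δ ∘L (wordOp T α).adjoint) h, h⟫_ℂ := by
    intro h α
    set A := wordOp T α
    set v := A.adjoint h with hv
    have hRR : ⟪R v, R v⟫_ℂ = ⟪(A ∘L Δ ∘L A.adjoint) h, h⟫_ℂ := by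
      calc ⟪R v, R v⟫_ℂ
          = ⟪R.adjoint (R v), v⟫_ℂ :=
            (ContinuousLinearMap.adjoint_inner_left R v (R v)).symm
        _ = ⟪R (R v), v⟫_ℂ := by rw [hRadj]
        _ = ⟪Δ v, v⟫_ℂ := by
              congr 1
              exact congrFun (congrArg (fun (S : H →L[ℂ] H) => (S : H → H)) hR) v
        _ = ⟪A (Δ v), h⟫_ℂ := by
              rw [hv]; exact ContinuousLinearMap.adjoint_inner_right A (Δ v) h
        _ = ⟪(A ∘L Δ ∘L A.adjoint) h, h⟫_ℂ := rfl
    rw [hKb h α, inner_smul_left, inner_smul_right, Complex.conj_ofReal, hRR, ← mul_assoc,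
      ← Complex.ofReal_mul, Real.mul_self_sqrt (hb α).le]
  -- isometry
  have hiso : ∀ h : H, ‖Kb h‖ = ‖h‖ := by
    intro h
    have hs := lp.hasSum_inner (𝕜 := ℂ) (Kb h) (Kb h)
    have h1 : Tendsto
        (fun N => ∑ α ∈ wordsUpTo n N,
          ⟪(Kb h : ∀ _ : Word n, H) α, (Kb h : ∀ _ : Word n, H) α⟫_ℂ)
        atTop (nhds ⟪Kb h, Kb h⟫_ℂ) := hs.comp (tendsto_wordsUpTo n)
    have h2 : ∀ N : ℕ, ∑ α ∈ wordsUpTo n N,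
        ⟪(Kb h : ∀ _ : Word n, H) α, (Kb h : ∀ _ : Word n, H) α⟫_ℂ
        = ⟪(∑ p ∈ Finset.range N, ∑ α ∈ wordsLen n p,
            ((b α : ℝ) : ℂ) • (wordOp T α ∘L Δ ∘L (wordOp T α).adjoint)) h, h⟫_ℂ := by
      intro N
      rw [sum_wordsUpTo]
      rw [ContinuousLinearMap.sum_apply, sum_inner]
      refine Finset.sum_congr rfl fun p _ => ?_
      rw [ContinuousLinearMap.sum_apply, sum_inner]
      refine Finset.sum_congr rfl fun α _ => ?_
      rw [key h α, ContinuousLinearMap.smul_apply, inner_smul_left, Complex.conj_ofReal]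
    have h3 : Tendsto
        (fun N => ∑ α ∈ wordsUpTo n N,
          ⟪(Kb h : ∀ _ : Word n, H) α, (Kb h : ∀ _ : Word n, H) α⟫_ℂ)
        atTop (nhds ⟪h, h⟫_ℂ) := by
      simp only [h2]
      exact (hpure h).inner tendsto_const_nhds
    have h4 : ⟪Kb h, Kb h⟫_ℂ = ⟪h, h⟫_ℂ := tendsto_nhds_unique h1 h3
    rw [inner_self_eq_norm_sq_to_K, inner_self_eq_norm_sq_to_K] at h4
    have h5 : ‖Kb h‖ ^ 2 = ‖h‖ ^ 2 := by exact_mod_cast h4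
    have := congrArg Real.sqrt h5
    rwa [Real.sqrt_sq (norm_nonneg _), Real.sqrt_sq (norm_nonneg _)] at this
  refine ⟨hiso, fun i => ?_⟩
  -- intertwining
  ext h α
  refine ext_inner_left ℂ fun k => ?_
  have lhs : ⟪k, ((Kb ∘L (T i).adjoint) h : ∀ _ : Word n, H) α⟫_ℂ
      = ((Real.sqrt (b α) : ℝ) : ℂ) *
        ⟪k, R ((wordOp T α).adjoint ((T i).adjoint h))⟫_ℂ := by
    rw [ContinuousLinearMap.comp_apply, hKb, inner_smul_right]
  have harg : (wordOp T (i :: α)).adjoint h = (wordOp T α).adjoint ((T i).adjoint h) := by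
    rw [wordOp_cons, ContinuousLinearMap.adjoint_comp]
    rfl
  have rhs : ⟪k, (((W i).adjoint ∘L Kb) h : ∀ _ : Word n, H) α⟫_ℂ
      = ((Real.sqrt (b α) : ℝ) : ℂ) *
        ⟪k, R ((wordOp T α).adjoint ((T i).adjoint h))⟫_ℂ := by
    calc ⟪k, (((W i).adjoint ∘L Kb) h : ∀ _ : Word n, H) α⟫_ℂ
        = ⟪lp.single 2 α k, (W i).adjoint (Kb h)⟫_ℂ :=
          (lp.inner_single_left (𝕜 := ℂ) α k (((W i).adjoint ∘L Kb) h)).symm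
      _ = ⟪(W i) (lp.single 2 α k), Kb h⟫_ℂ :=
          ContinuousLinearMap.adjoint_inner_right (W i) (lp.single 2 α k) (Kb h)
      _ = ((Real.sqrt (b α / b (i :: α)) : ℝ) : ℂ) * ⟪lp.single 2 (i :: α) k, Kb h⟫_ℂ := by
          rw [hW, inner_smul_left, Complex.conj_ofReal]
      _ = ((Real.sqrt (b α / b (i :: α)) : ℝ) : ℂ) *
            ⟪k, (Kb h : ∀ _ : Word n, H) (i :: α)⟫_ℂ := by
          rw [lp.inner_single_left (𝕜 := ℂ)]
      _ = ((Real.sqrt (b α) : ℝ) : ℂ) *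
            ⟪k, R ((wordOp T α).adjoint ((T i).adjoint h))⟫_ℂ := by
          rw [hKb, harg, inner_smul_right, ← mul_assoc, ← Complex.ofReal_mul,
            ← Real.sqrt_mul (div_nonneg (hb α).le (hb _).le) (b (i :: α)),
            div_mul_cancel₀ _ (hb (i :: α)).ne']
  exact lhs.trans rhs.symm
end
end
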